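/- Fix an integer k ≥ 2 and let S denote the set of k-free positive integers. Define η(q,a) = ∑_{d ≥ 1, (q,d^k) | a} μ(d)/[q, d^k]. Then for every ε > 0, uniformly for 1 ≤ q ≤ x: ∑_{n ≤ x, n ∈ S} η(q, n) = x ∑_{a=1}^q η(q,a)² + O_{k,ε}( x^{1/k+ε} ). -/

import Mathlib

open ArithmeticFunction
open scoped Classical

/-- `η(q,a) = ∑_{d ≥ 1, (q,d^k) | a} μ(d)/[q, d^k]`. -/
noncomputable def eta (k q a : ℕ) : ℝ :=
  ∑' d : ℕ+, if Nat.gcd q ((d : ℕ) ^ k) ∣ a then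
    (moebius (d : ℕ) : ℝ) / (Nat.lcm q ((d : ℕ) ^ k) : ℝ) else 0

namespace S18

/-! ### Basic definitions -/

noncomputable def c (k q d : ℕ) : ℝ := (moebius d : ℝ) / (Nat.lcm q (d ^ k) : ℝ)

noncomputable def t (k q d a : ℕ) : ℝ :=
  if Nat.gcd q (d ^ k) ∣ a then c k q d else 0

def Lf (k q d e : ℕ) : ℕ := Nat.lcm (Nat.gcd q (d ^ k)) (e ^ k)

lemma t_zero (k q a : ℕ) : t k q 0 a = 0 := by
  simp [t, c]

lemma eta_eq (k q a : ℕ) : eta k q a = ∑' d : ℕ, t k q d a := by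
  have h1 : eta k q a = ∑' d : ℕ+, t k q (d : ℕ) a := tsum_congr fun d => rfl
  rw [h1]
  have h2 : (∑' d : ℕ+, t k q (d : ℕ) a)
      = ∑' x : ↥{n : ℕ | 0 < n}, t k q (x : ℕ) a := rfl
  rw [h2, tsum_subtype {n : ℕ | 0 < n} (fun d => t k q d a)]
  refine tsum_congr fun d => ?_
  by_cases hd : d = 0
  · subst hd; simp [Set.indicator, t_zero]
  · simp [Set.indicator, Nat.pos_of_ne_zero hd]

lemma moebius_abs (d : ℕ) : |(moebius d : ℝ)| ≤ 1 := by
  have : |moebius d| ≤ 1 := by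
    by_cases h : Squarefree d
    · rw [abs_moebius_eq_one_of_squarefree h]
    · simp [moebius_eq_zero_of_not_squarefree h]
  rw [← Int.cast_abs]
  exact_mod_cast this

/-! ### Elementary lcm bounds -/

lemma pow_le_lcm {q d : ℕ} (hq : 1 ≤ q) (hd : 1 ≤ d) (k : ℕ) : d ^ k ≤ Nat.lcm q (d ^ k) :=
  Nat.le_of_dvd (Nat.pos_of_ne_zero
    (Nat.lcm_ne_zero (by omega) (by positivity))) (Nat.dvd_lcm_right _ _)

lemma pow_le_Lf {q e : ℕ} (hq : 1 ≤ q) (he : 1 ≤ e) (k d : ℕ) :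
    e ^ k ≤ Lf k q d e :=
  Nat.le_of_dvd (Nat.pos_of_ne_zero
    (Nat.lcm_ne_zero (Nat.gcd_ne_zero_left (by omega)) (by positivity)))
    (Nat.dvd_lcm_right _ _)

lemma Lf_pos {q e : ℕ} (hq : 1 ≤ q) (he : 1 ≤ e) (k d : ℕ) : 0 < Lf k q d e :=
  lt_of_lt_of_le (by positivity) (pow_le_Lf hq he k d)

/-! ### Summability basics -/

lemma summable_invpow {k : ℕ} (hk : 2 ≤ k) : Summable (fun d : ℕ => ((d : ℝ) ^ k)⁻¹) :=
  Real.summable_nat_pow_inv.2 (by omega)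

lemma c_abs {k q : ℕ} (hk : 2 ≤ k) (hq : 1 ≤ q) (d : ℕ) :
    |c k q d| ≤ ((d : ℝ) ^ k)⁻¹ := by
  rcases Nat.eq_zero_or_pos d with hd | hd
  · subst hd
    simp [c, zero_pow (by omega : k ≠ 0)]
  · have hL : (0:ℝ) < (Nat.lcm q (d ^ k) : ℝ) := by
      have := lt_of_lt_of_le (by positivity : 0 < d ^ k) (pow_le_lcm hq hd k)
      exact_mod_cast this
    have hdk : ((d:ℝ) ^ k) ≤ (Nat.lcm q (d ^ k) : ℝ) := by
      exact_mod_cast pow_le_lcm hq hd k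
    have hdk0 : (0:ℝ) < (d:ℝ) ^ k := by positivity
    rw [c, abs_div, abs_of_pos hL]
    calc |(moebius d : ℝ)| / (Nat.lcm q (d ^ k) : ℝ)
        ≤ 1 / (Nat.lcm q (d ^ k) : ℝ) := by
          gcongr
          exact moebius_abs d
      _ ≤ 1 / ((d:ℝ) ^ k) := by
          apply one_div_le_one_div_of_le hdk0 hdk
      _ = ((d : ℝ) ^ k)⁻¹ := one_div _

lemma t_abs {k q : ℕ} (hk : 2 ≤ k) (hq : 1 ≤ q) (d a : ℕ) :
    |t k q d a| ≤ ((d : ℝ) ^ k)⁻¹ := by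
  rw [t]
  split_ifs with h
  · exact c_abs hk hq d
  · simp only [abs_zero]; positivity

lemma summable_t {k q : ℕ} (hk : 2 ≤ k) (hq : 1 ≤ q) (a : ℕ) :
    Summable (fun d : ℕ => t k q d a) :=
  Summable.of_norm_bounded (summable_invpow hk)
    (fun d => by rw [Real.norm_eq_abs]; exact t_abs hk hq d a)

lemma h_abs {k q : ℕ} (hk : 2 ≤ k) (hq : 1 ≤ q) (d e : ℕ) :
    |(moebius e : ℝ) / (Lf k q d e : ℝ)| ≤ ((e : ℝ) ^ k)⁻¹ := by
  rcases Nat.eq_zero_or_pos e with he | he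
  · subst he
    simp [zero_pow (by omega : k ≠ 0)]
  · have hL : (0:ℝ) < (Lf k q d e : ℝ) := by exact_mod_cast Lf_pos hq he k d
    have hek : ((e:ℝ) ^ k) ≤ (Lf k q d e : ℝ) := by exact_mod_cast pow_le_Lf hq he k d
    have hek0 : (0:ℝ) < (e:ℝ) ^ k := by positivity
    rw [abs_div, abs_of_pos hL]
    calc |(moebius e : ℝ)| / (Lf k q d e : ℝ)
        ≤ 1 / (Lf k q d e : ℝ) := by
          gcongr
          exact moebius_abs e
      _ ≤ 1 / ((e:ℝ) ^ k) := one_div_le_one_div_of_le hek0 hek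
      _ = ((e : ℝ) ^ k)⁻¹ := one_div _

lemma summable_h {k q : ℕ} (hk : 2 ≤ k) (hq : 1 ≤ q) (d : ℕ) :
    Summable (fun e : ℕ => (moebius e : ℝ) / (Lf k q d e : ℝ)) :=
  Summable.of_norm_bounded (summable_invpow hk)
    (fun e => by rw [Real.norm_eq_abs]; exact h_abs hk hq d e)

/-! ### Tail estimates -/

lemma tail2 (E : ℕ) (hE : 1 ≤ E) :
    ∑' e : ℕ, (if E < e then ((e : ℝ) ^ 2)⁻¹ else 0) ≤ (E : ℝ)⁻¹ := by
  have hs : Summable (fun e : ℕ => (if E < e then ((e : ℝ) ^ 2)⁻¹ else 0)) := by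
    apply Summable.of_nonneg_of_le (fun e => by positivity) (fun e => ?_)
      (summable_invpow (le_refl 2))
    split_ifs with h
    · exact le_refl _
    · positivity
  refine Summable.tsum_le_of_sum_le hs fun s => ?_
  set n : ℕ := max (s.sup _root_.id) E with hn
  have h1 : ∑ e ∈ s, (if E < e then ((e : ℝ) ^ 2)⁻¹ else 0)
      = ∑ e ∈ s.filter (fun e => E < e), ((e : ℝ) ^ 2)⁻¹ := by
    rw [Finset.sum_filter]
  have h2 : s.filter (fun e => E < e) ⊆ Finset.Ioc E n := by
    intro x hx
    simp only [Finset.mem_filter] at hx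
    refine Finset.mem_Ioc.2 ⟨hx.2, le_trans ?_ (le_max_left _ _)⟩
    exact Finset.le_sup (f := _root_.id) hx.1
  have h3 : ∑ e ∈ s.filter (fun e => E < e), ((e : ℝ) ^ 2)⁻¹
      ≤ ∑ e ∈ Finset.Ioc E n, ((e : ℝ) ^ 2)⁻¹ :=
    Finset.sum_le_sum_of_subset_of_nonneg h2 (fun i _ _ => by positivity)
  have h4 : ∑ e ∈ Finset.Ioc E n, ((e : ℝ) ^ 2)⁻¹ ≤ (E : ℝ)⁻¹ - (n : ℝ)⁻¹ :=
    sum_Ioc_inv_sq_le_sub (by omega) (le_max_right _ _)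
  have h5 : (0:ℝ) ≤ (n : ℝ)⁻¹ := by positivity
  linarith

lemma tailk {k : ℕ} (hk : 2 ≤ k) (E : ℕ) (hE : 1 ≤ E) :
    ∑' e : ℕ, (if E < e then ((e : ℝ) ^ k)⁻¹ else 0) ≤ (((E : ℝ)) ^ (k - 1))⁻¹ := by
  have hE0 : (0:ℝ) < E := by exact_mod_cast hE
  have key : ∀ e : ℕ, (if E < e then ((e : ℝ) ^ k)⁻¹ else 0)
      ≤ ((E : ℝ) ^ (k - 2))⁻¹ * (if E < e then ((e : ℝ) ^ 2)⁻¹ else 0) := by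
    intro e
    split_ifs with h
    · have he0 : (0:ℝ) < e := by exact_mod_cast Nat.lt_of_le_of_lt (Nat.zero_le E) h
      have hEe : (E : ℝ) ≤ e := by exact_mod_cast le_of_lt h
      rw [← mul_inv]
      apply inv_anti₀ (by positivity)
      calc (E : ℝ) ^ (k - 2) * (e : ℝ) ^ 2 ≤ (e : ℝ) ^ (k - 2) * (e : ℝ) ^ 2 := by
            apply mul_le_mul_of_nonneg_right (pow_le_pow_left₀ (le_of_lt hE0) hEe _)
              (by positivity)
        _ = (e : ℝ) ^ k := by rw [← pow_add]; congr 1; omega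
    · simp
  have hs2 : Summable (fun e : ℕ =>
      ((E : ℝ) ^ (k - 2))⁻¹ * (if E < e then ((e : ℝ) ^ 2)⁻¹ else 0)) := by
    apply Summable.mul_left
    apply Summable.of_nonneg_of_le (fun e => by positivity) (fun e => ?_)
      (summable_invpow (le_refl 2))
    split_ifs with h
    · exact le_refl _
    · positivity
  have hs1 : Summable (fun e : ℕ => (if E < e then ((e : ℝ) ^ k)⁻¹ else 0)) := by
    apply Summable.of_nonneg_of_le (fun e => by positivity) (fun e => ?_) (summable_invpow hk)
    split_ifs with h
    · exact le_refl _
    · positivity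
  calc ∑' e : ℕ, (if E < e then ((e : ℝ) ^ k)⁻¹ else 0)
      ≤ ∑' e : ℕ, ((E : ℝ) ^ (k - 2))⁻¹ * (if E < e then ((e : ℝ) ^ 2)⁻¹ else 0) :=
        Summable.tsum_le_tsum key hs1 hs2
    _ = ((E : ℝ) ^ (k - 2))⁻¹ * ∑' e : ℕ, (if E < e then ((e : ℝ) ^ 2)⁻¹ else 0) := tsum_mul_left
    _ ≤ ((E : ℝ) ^ (k - 2))⁻¹ * (E : ℝ)⁻¹ :=
        mul_le_mul_of_nonneg_left (tail2 E hE) (by positivity)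
    _ = (((E : ℝ)) ^ (k - 1))⁻¹ := by
        rw [← mul_inv]
        congr 1
        rw [← pow_succ]
        congr 1
        omega

lemma tsum_invpow_le {k : ℕ} (hk : 2 ≤ k) : ∑' d : ℕ, ((d : ℝ) ^ k)⁻¹ ≤ 2 := by
  have key : ∀ d : ℕ, ((d : ℝ) ^ k)⁻¹
      ≤ (if 1 < d then ((d : ℝ) ^ k)⁻¹ else 0) + (if d = 1 then (1:ℝ) else 0) := by
    intro d
    match d with
    | 0 => simp [zero_pow (by omega : k ≠ 0)]
    | 1 => simp
    | (n+2) => simp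
  have hs1 : Summable (fun d : ℕ => (if 1 < d then ((d : ℝ) ^ k)⁻¹ else 0)) := by
    apply Summable.of_nonneg_of_le (fun e => by positivity) (fun e => ?_) (summable_invpow hk)
    split_ifs with h
    · exact le_refl _
    · positivity
  have hs2 : Summable (fun d : ℕ => (if d = 1 then (1:ℝ) else 0)) := by
    apply summable_of_ne_finset_zero (s := {1})
    intro b hb
    simp at hb
    simp [hb]
  calc ∑' d : ℕ, ((d : ℝ) ^ k)⁻¹
      ≤ ∑' d : ℕ, ((if 1 < d then ((d : ℝ) ^ k)⁻¹ else 0) + (if d = 1 then (1:ℝ) else 0)) :=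
        Summable.tsum_le_tsum key (summable_invpow hk) (hs1.add hs2)
    _ = (∑' d : ℕ, (if 1 < d then ((d : ℝ) ^ k)⁻¹ else 0))
          + ∑' d : ℕ, (if d = 1 then (1:ℝ) else 0) := Summable.tsum_add hs1 hs2
    _ ≤ ((1 : ℝ) ^ (k-1))⁻¹ + 1 := by
        have := tailk hk 1 (le_refl 1)
        have h2 : ∑' d : ℕ, (if d = 1 then (1:ℝ) else 0) = 1 := tsum_ite_eq 1 1
        push_cast at this ⊢
        rw [h2]
        linarith
    _ ≤ 2 := by norm_num

lemma B_abs {k q : ℕ} (hk : 2 ≤ k) (hq : 1 ≤ q) (d : ℕ) :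
    |∑' e : ℕ, (moebius e : ℝ) / (Lf k q d e : ℝ)| ≤ 2 := by
  have h1 : Summable (fun e : ℕ => ‖(moebius e : ℝ) / (Lf k q d e : ℝ)‖) := by
    apply Summable.of_nonneg_of_le (fun e => norm_nonneg _)
      (fun e => by rw [Real.norm_eq_abs]; exact h_abs hk hq d e) (summable_invpow hk)
  calc |∑' e : ℕ, (moebius e : ℝ) / (Lf k q d e : ℝ)|
      ≤ ∑' e : ℕ, ‖(moebius e : ℝ) / (Lf k q d e : ℝ)‖ := by
        rw [← Real.norm_eq_abs]; exact norm_tsum_le_tsum_norm h1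
    _ ≤ ∑' e : ℕ, ((e : ℝ) ^ k)⁻¹ :=
        Summable.tsum_le_tsum (fun e => by rw [Real.norm_eq_abs]; exact h_abs hk hq d e)
          h1 (summable_invpow hk)
    _ ≤ 2 := tsum_invpow_le hk


lemma sqfree_pow_dvd_iff {k e n : ℕ} (he : Squarefree e) (hn : n ≠ 0) :
    e ^ k ∣ n ↔ ∀ p ∈ e.primeFactors, p ^ k ∣ n := by
  have he0 : e ≠ 0 := he.ne_zero
  rw [← Nat.factorization_le_iff_dvd (pow_ne_zero _ he0) hn, Nat.factorization_pow,
    Finsupp.le_def]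
  constructor
  · intro h p hp
    rw [(Nat.prime_of_mem_primeFactors hp).pow_dvd_iff_le_factorization hn]
    have h1 := h p
    simp only [Finsupp.smul_apply, smul_eq_mul] at h1
    have h2 : 1 ≤ e.factorization p := by
      have : p ∈ e.factorization.support := by rwa [Nat.support_factorization]
      have := Finsupp.mem_support_iff.1 this
      omega
    calc k = k * 1 := by ring
      _ ≤ k * e.factorization p := Nat.mul_le_mul_left k h2
      _ ≤ n.factorization p := h1
  · intro h p
    simp only [Finsupp.smul_apply, smul_eq_mul]
    by_cases hp : p ∈ e.primeFactors
    · have h1 := h p hp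
      rw [(Nat.prime_of_mem_primeFactors hp).pow_dvd_iff_le_factorization hn] at h1
      have h2 : e.factorization p ≤ 1 := (Nat.squarefree_iff_factorization_le_one he0).1 he p
      calc k * e.factorization p ≤ k * 1 := Nat.mul_le_mul_left k h2
        _ = k := by ring
        _ ≤ n.factorization p := h1
    · have : e.factorization p = 0 := by
        rw [← Finsupp.notMem_support_iff, Nat.support_factorization]; exact hp
      simp [this]

/-- the `k`-full radical -/
noncomputable def rad (k n : ℕ) : ℕ := ∏ p ∈ n.primeFactors.filter (fun p => p ^ k ∣ n), p

lemma rad_primes {k n : ℕ} : ∀ p ∈ n.primeFactors.filter (fun p => p ^ k ∣ n), p.Prime :=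
  fun p hp => Nat.prime_of_mem_primeFactors (Finset.mem_filter.1 hp).1

lemma rad_primeFactors (k n : ℕ) :
    (rad k n).primeFactors = n.primeFactors.filter (fun p => p ^ k ∣ n) :=
  Nat.primeFactors_prod rad_primes

lemma rad_ne_zero (k n : ℕ) : rad k n ≠ 0 :=
  Finset.prod_ne_zero_iff.2 fun p hp => (rad_primes p hp).ne_zero

lemma rad_squarefree (k n : ℕ) : Squarefree (rad k n) := by
  rw [Nat.squarefree_iff_factorization_le_one (rad_ne_zero k n)]
  intro p
  rw [rad, Nat.factorization_prod (fun p hp => (rad_primes p hp).ne_zero)]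
  rw [Finset.sum_apply']
  have : ∀ x ∈ n.primeFactors.filter (fun p => p ^ k ∣ n),
      (Nat.factorization x) p = if x = p then 1 else 0 := by
    intro x hx
    rw [(rad_primes x hx).factorization, Finsupp.single_apply]
  rw [Finset.sum_congr rfl this, Finset.sum_ite_eq' _ p (fun _ => 1)]
  split_ifs <;> omega

lemma rad_dvd (k n : ℕ) (hk : 1 ≤ k) (hn : n ≠ 0) : rad k n ∣ n := by
  have h1 : rad k n ∣ ∏ p ∈ n.primeFactors, p :=
    Finset.prod_dvd_prod_of_subset _ _ _ (Finset.filter_subset _ _)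
  exact h1.trans (Nat.prod_primeFactors_dvd n)

lemma dvd_rad_iff {k n e : ℕ} (hk : 1 ≤ k) (hn : n ≠ 0) :
    e ∣ rad k n ↔ Squarefree e ∧ e ^ k ∣ n := by
  constructor
  · intro hdvd
    have he : Squarefree e := (rad_squarefree k n).squarefree_of_dvd hdvd
    refine ⟨he, (sqfree_pow_dvd_iff he hn).2 fun p hp => ?_⟩
    have hpr : p ∣ rad k n := (Nat.dvd_of_mem_primeFactors hp).trans hdvd
    have : p ∈ (rad k n).primeFactors := by
      rw [Nat.mem_primeFactors]
      exact ⟨Nat.prime_of_mem_primeFactors hp, hpr, rad_ne_zero k n⟩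
    rw [rad_primeFactors] at this
    exact (Finset.mem_filter.1 this).2
  · rintro ⟨he, hpow⟩
    have h1 : e.primeFactors ⊆ n.primeFactors.filter (fun p => p ^ k ∣ n) := by
      intro p hp
      have hppr := Nat.prime_of_mem_primeFactors hp
      have hpk : p ^ k ∣ n := (sqfree_pow_dvd_iff he hn).1 hpow p hp
      refine Finset.mem_filter.2 ⟨Nat.mem_primeFactors.2 ⟨hppr, ?_, hn⟩, hpk⟩
      exact (dvd_pow_self p (by omega : k ≠ 0)).trans hpk
    calc e = ∏ p ∈ e.primeFactors, p := (Nat.prod_primeFactors_of_squarefree he).symm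
      _ ∣ rad k n := Finset.prod_dvd_prod_of_subset _ _ _ h1

lemma sum_moebius_divisors (r : ℕ) (hr : r ≠ 0) :
    ∑ e ∈ r.divisors, moebius e = if r = 1 then 1 else 0 := by
  have h := ArithmeticFunction.moebius_mul_coe_zeta
  have h2 : (moebius * (ArithmeticFunction.zeta : ArithmeticFunction ℤ)) r
      = (1 : ArithmeticFunction ℤ) r := by rw [h]
  rwa [ArithmeticFunction.coe_mul_zeta_apply, ArithmeticFunction.one_apply] at h2

lemma rad_eq_one_iff {k n : ℕ} (hk : 1 ≤ k) (hn : n ≠ 0) :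
    rad k n = 1 ↔ ∀ p : ℕ, p.Prime → ¬ p ^ k ∣ n := by
  constructor
  · intro h1 p hp hpk
    have : p ∣ rad k n := by
      rw [dvd_rad_iff hk hn]
      refine ⟨hp.squarefree, (sqfree_pow_dvd_iff hp.squarefree hn).2 fun r hr => ?_⟩
      rw [Nat.Prime.primeFactors hp, Finset.mem_singleton] at hr
      rwa [hr]
    rw [h1] at this
    exact hp.one_lt.ne' (Nat.eq_one_of_dvd_one this)  -- fix
  · intro h
    by_contra hne
    obtain ⟨p, hp, hpdvd⟩ := Nat.exists_prime_and_dvd hne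
    have : p ∈ (rad k n).primeFactors := Nat.mem_primeFactors.2 ⟨hp, hpdvd, rad_ne_zero k n⟩
    rw [rad_primeFactors] at this
    exact h p hp (Finset.mem_filter.1 this).2

/-- k-free indicator as Möbius sum -/
lemma kfree_expand {k n N : ℕ} (hk : 1 ≤ k) (hn : 1 ≤ n) (hnN : n ≤ N) :
    (if ∀ p : ℕ, p.Prime → ¬ p ^ k ∣ n then (1 : ℝ) else 0)
      = ∑ e ∈ Finset.Icc 1 N, (if e ^ k ∣ n then (moebius e : ℝ) else 0) := by
  have hn0 : n ≠ 0 := by omega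
  have hset : (Finset.Icc 1 N).filter (fun e => Squarefree e ∧ e ^ k ∣ n)
      = (rad k n).divisors := by
    ext e
    simp only [Finset.mem_filter, Finset.mem_Icc, Nat.mem_divisors]
    constructor
    · rintro ⟨_, he, hpow⟩
      exact ⟨(dvd_rad_iff hk hn0).2 ⟨he, hpow⟩, rad_ne_zero k n⟩
    · rintro ⟨hdvd, _⟩
      obtain ⟨he, hpow⟩ := (dvd_rad_iff hk hn0).1 hdvd
      have he1 : 1 ≤ e := Nat.pos_of_ne_zero he.ne_zero
      have : e ^ k ≤ n := Nat.le_of_dvd (by omega) hpow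
      have : e ≤ e ^ k := Nat.le_self_pow (by omega) e
      exact ⟨⟨he1, by omega⟩, he, hpow⟩
  have hsum : ∑ e ∈ Finset.Icc 1 N, (if e ^ k ∣ n then (moebius e : ℝ) else 0)
      = ∑ e ∈ (Finset.Icc 1 N).filter (fun e => Squarefree e ∧ e ^ k ∣ n), (moebius e : ℝ) := by
    rw [Finset.sum_filter]
    refine Finset.sum_congr rfl fun e _ => ?_
    by_cases hsq : Squarefree e
    · by_cases hd : e ^ k ∣ n <;> simp [hsq, hd]
    · by_cases hd : e ^ k ∣ n <;>
        simp [hsq, hd, moebius_eq_zero_of_not_squarefree hsq]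
  rw [hsum, hset]
  have : ∑ e ∈ (rad k n).divisors, (moebius e : ℝ)
      = ((∑ e ∈ (rad k n).divisors, moebius e : ℤ) : ℝ) := by push_cast; rfl
  rw [this, sum_moebius_divisors _ (rad_ne_zero k n)]
  rw [← rad_eq_one_iff hk hn0]
  split_ifs <;> simp


lemma count_dvd (N m : ℕ) (c : ℝ) :
    ∑ n ∈ Finset.Icc 1 N, (if m ∣ n then c else 0) = ((N / m : ℕ) : ℝ) * c := by
  have h0 : Finset.Icc 1 N = Finset.Ioc 0 N := rfl
  rw [h0, ← Finset.sum_filter, Finset.sum_const, ← Nat.Ioc_filter_dvd_card_eq_div N m]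
  simp [nsmul_eq_mul]

lemma key_nat (q gd A : ℕ) (hgd : gd ∣ q) :
    q * Nat.lcm gd A = Nat.lcm q A * Nat.lcm gd (Nat.gcd q A) := by
  set ge := Nat.gcd q A with hge
  have hgcd : Nat.gcd gd A = Nat.gcd gd ge := by
    rw [hge, ← Nat.gcd_assoc, Nat.gcd_eq_left hgd]
  rcases Nat.eq_zero_or_pos q with hq | hq
  · subst hq; simp [Nat.lcm, hge]
  rcases Nat.eq_zero_or_pos A with hA | hA
  · subst hA; simp [Nat.lcm, hge]
  have hge_pos : 0 < ge := Nat.gcd_pos_of_pos_left A hq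
  have hgdA_pos : 0 < Nat.gcd gd A * ge := by
    have : 0 < Nat.gcd gd A := by
      rw [hgcd]; exact Nat.gcd_pos_of_pos_right gd hge_pos
    positivity
  apply Nat.eq_of_mul_eq_mul_left hgdA_pos
  have h1 : Nat.gcd gd A * Nat.lcm gd A = gd * A := Nat.gcd_mul_lcm gd A
  have h2 : Nat.gcd q A * Nat.lcm q A = q * A := Nat.gcd_mul_lcm q A
  have h3 : Nat.gcd gd ge * Nat.lcm gd ge = gd * ge := Nat.gcd_mul_lcm gd ge
  rw [hgcd] at h1 ⊢
  rw [← hge] at h2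
  zify at h1 h2 h3 ⊢
  set G := (Nat.gcd gd ge : ℤ)
  set L1 := (Nat.lcm gd A : ℤ)
  set L2 := (Nat.lcm q A : ℤ)
  set L3 := (Nat.lcm gd ge : ℤ)
  linear_combination ((q : ℤ) * ge) * h1 - (ge : ℤ) * L2 * h3 - ((gd : ℤ) * ge) * h2

lemma key_div {q : ℕ} (hq : 1 ≤ q) (gd A : ℕ) (hgd : gd ∣ q) :
    (q / Nat.lcm gd (Nat.gcd q A)) * Nat.lcm gd A = Nat.lcm q A := by
  have hgd1 : gd ≠ 0 := by rintro rfl; rw [zero_dvd_iff] at hgd; omega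
  have hge1 : Nat.gcd q A ≠ 0 := Nat.gcd_ne_zero_left (by omega)
  have hLgg : Nat.lcm gd (Nat.gcd q A) ≠ 0 := Nat.lcm_ne_zero hgd1 hge1
  have hdvd : Nat.lcm gd (Nat.gcd q A) ∣ q := Nat.lcm_dvd hgd (Nat.gcd_dvd_left q A)
  obtain ⟨m, hm⟩ := hdvd
  have hqd : q / Nat.lcm gd (Nat.gcd q A) = m :=
    Nat.div_eq_of_eq_mul_left (Nat.pos_of_ne_zero hLgg) (hm.trans (Nat.mul_comm _ _))
  have hkey := key_nat q gd A hgd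
  rw [hqd]
  have h2 : Nat.lcm gd (Nat.gcd q A) * (m * Nat.lcm gd A)
      = Nat.lcm gd (Nat.gcd q A) * Nat.lcm q A := by
    rw [← mul_assoc, ← hm, hkey]; ring
  exact Nat.eq_of_mul_eq_mul_left (Nat.pos_of_ne_zero hLgg) h2

lemma ident {k q : ℕ} (hk : 2 ≤ k) (hq : 1 ≤ q) (d e : ℕ) :
    ((q / Nat.lcm (Nat.gcd q (d ^ k)) (Nat.gcd q (e ^ k)) : ℕ) : ℝ) * (c k q d * c k q e)
      = c k q d * ((moebius e : ℝ) / (Lf k q d e : ℝ)) := by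
  rcases Nat.eq_zero_or_pos e with he | he
  · subst he
    simp [c, Lf, zero_pow (by omega : k ≠ 0)]
  · have hA1 : 1 ≤ e ^ k := Nat.one_le_iff_ne_zero.2 (pow_ne_zero k (by omega))
    have hle : (0:ℝ) < (Nat.lcm q (e ^ k) : ℝ) := by
      exact_mod_cast Nat.pos_of_ne_zero (Nat.lcm_ne_zero (by omega) (pow_ne_zero k (by omega)))
    have hLf : (0:ℝ) < (Lf k q d e : ℝ) := by exact_mod_cast Lf_pos hq he k d
    have hkd := key_div hq (Nat.gcd q (d ^ k)) (e ^ k) (Nat.gcd_dvd_left _ _)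
    have hcast : ((q / Nat.lcm (Nat.gcd q (d ^ k)) (Nat.gcd q (e ^ k)) : ℕ) : ℝ)
        * (Lf k q d e : ℝ) = (Nat.lcm q (e ^ k) : ℝ) := by
      rw [Lf]
      exact_mod_cast congrArg (Nat.cast : ℕ → ℝ) hkd
    have h2 : ((q / Nat.lcm (Nat.gcd q (d ^ k)) (Nat.gcd q (e ^ k)) : ℕ) : ℝ)
        * ((moebius e : ℝ) / (Nat.lcm q (e ^ k) : ℝ))
        = (moebius e : ℝ) / (Lf k q d e : ℝ) := by
      have hq2 : ((q / Nat.lcm (Nat.gcd q (d ^ k)) (Nat.gcd q (e ^ k)) : ℕ) : ℝ)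
          = (Nat.lcm q (e ^ k) : ℝ) / (Lf k q d e : ℝ) := by
        rw [eq_div_iff (ne_of_gt hLf)]; exact hcast
      rw [hq2]
      field_simp
    calc ((q / Nat.lcm (Nat.gcd q (d ^ k)) (Nat.gcd q (e ^ k)) : ℕ) : ℝ) * (c k q d * c k q e)
        = c k q d * (((q / Nat.lcm (Nat.gcd q (d ^ k)) (Nat.gcd q (e ^ k)) : ℕ) : ℝ)
            * c k q e) := by ring
      _ = c k q d * ((moebius e : ℝ) / (Lf k q d e : ℝ)) := by
          rw [show c k q e = (moebius e : ℝ) / (Nat.lcm q (e ^ k) : ℝ) from rfl, h2]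

/-! ### The two main summation formulas -/

lemma S_eq (k q N : ℕ) (hk : 2 ≤ k) (hq : 1 ≤ q) :
    ∑ n ∈ Finset.Icc 1 N, (if ∀ p : ℕ, p.Prime → ¬ p ^ k ∣ n then eta k q n else 0)
      = ∑' d : ℕ, c k q d *
          ∑ e ∈ Finset.Icc 1 N, (moebius e : ℝ) * ((N / Lf k q d e : ℕ) : ℝ) := by
  have step1 : ∀ n ∈ Finset.Icc 1 N,
      (if (∀ p : ℕ, p.Prime → ¬ p ^ k ∣ n) then eta k q n else 0)
        = ∑' d : ℕ, (if (∀ p : ℕ, p.Prime → ¬ p ^ k ∣ n) then (1:ℝ) else 0) * t k q d n := by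
    intro n _
    rw [tsum_mul_left]
    split_ifs with h
    · rw [one_mul, eta_eq]
    · simp
  rw [Finset.sum_congr rfl step1,
    ← Summable.tsum_finsetSum (fun n _ => (summable_t hk hq n).mul_left _)]
  refine tsum_congr fun d => ?_
  calc ∑ n ∈ Finset.Icc 1 N, (if (∀ p : ℕ, p.Prime → ¬ p ^ k ∣ n) then (1:ℝ) else 0) * t k q d n
      = ∑ n ∈ Finset.Icc 1 N, ∑ e ∈ Finset.Icc 1 N,
          (if e ^ k ∣ n then (moebius e : ℝ) else 0) * t k q d n := by
        refine Finset.sum_congr rfl fun n hn => ?_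
        obtain ⟨hn1, hn2⟩ := Finset.mem_Icc.1 hn
        rw [← Finset.sum_mul, ← kfree_expand (by omega : 1 ≤ k) hn1 hn2]
    _ = ∑ e ∈ Finset.Icc 1 N, ∑ n ∈ Finset.Icc 1 N,
          (if e ^ k ∣ n then (moebius e : ℝ) else 0) * t k q d n := Finset.sum_comm
    _ = ∑ e ∈ Finset.Icc 1 N, ((N / Lf k q d e : ℕ) : ℝ) * ((moebius e : ℝ) * c k q d) := by
        refine Finset.sum_congr rfl fun e _ => ?_
        have hcond : ∀ n : ℕ, ((if e ^ k ∣ n then (moebius e : ℝ) else 0) * t k q d n)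
            = (if Lf k q d e ∣ n then (moebius e : ℝ) * c k q d else 0) := by
          intro n
          rw [t, Lf]
          by_cases h1 : e ^ k ∣ n <;> by_cases h2 : Nat.gcd q (d ^ k) ∣ n
          · rw [if_pos h1, if_pos h2, if_pos (Nat.lcm_dvd h2 h1)]
          · rw [if_pos h1, if_neg h2,
              if_neg (fun h => h2 ((Nat.dvd_lcm_left _ _).trans h)), mul_zero]
          · rw [if_neg h1, if_pos h2,
              if_neg (fun h => h1 ((Nat.dvd_lcm_right _ _).trans h)), zero_mul]
          · rw [if_neg h1, if_neg h2,
              if_neg (fun h => h1 ((Nat.dvd_lcm_right _ _).trans h)), zero_mul]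
        rw [Finset.sum_congr rfl (fun n _ => hcond n), count_dvd]
    _ = c k q d * ∑ e ∈ Finset.Icc 1 N, (moebius e : ℝ) * ((N / Lf k q d e : ℕ) : ℝ) := by
        rw [Finset.mul_sum]
        exact Finset.sum_congr rfl fun e _ => by ring

lemma T_eq (k q : ℕ) (hk : 2 ≤ k) (hq : 1 ≤ q) (x : ℝ) :
    x * ∑ a ∈ Finset.Icc 1 q, (eta k q a) ^ 2
      = ∑' d : ℕ, c k q d *
          (x * ∑' e : ℕ, (moebius e : ℝ) / (Lf k q d e : ℝ)) := by
  have h1 : ∀ a : ℕ, (eta k q a) ^ 2 = ∑' d : ℕ, t k q d a * eta k q a := by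
    intro a
    rw [sq]
    conv_lhs => rw [eta_eq]
    rw [← tsum_mul_right, ← eta_eq]
  have h2 : ∑ a ∈ Finset.Icc 1 q, (eta k q a) ^ 2
      = ∑' d : ℕ, ∑ a ∈ Finset.Icc 1 q, t k q d a * eta k q a := by
    rw [Finset.sum_congr rfl (fun a _ => h1 a),
      ← Summable.tsum_finsetSum (fun a _ => (summable_t hk hq a).mul_right _)]
  have h3 : ∀ d : ℕ, ∑ a ∈ Finset.Icc 1 q, t k q d a * eta k q a
      = c k q d * ∑' e : ℕ, (moebius e : ℝ) / (Lf k q d e : ℝ) := by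
    intro d
    have h4 : ∀ a ∈ Finset.Icc 1 q, t k q d a * eta k q a
        = ∑' e : ℕ, t k q d a * t k q e a := by
      intro a _
      rw [eta_eq, tsum_mul_left]
    rw [Finset.sum_congr rfl h4,
      ← Summable.tsum_finsetSum (fun a _ => (summable_t hk hq a).mul_left _)]
    have h5 : ∀ e : ℕ, ∑ a ∈ Finset.Icc 1 q, t k q d a * t k q e a
        = c k q d * ((moebius e : ℝ) / (Lf k q d e : ℝ)) := by
      intro e
      have hcond : ∀ a : ℕ, t k q d a * t k q e a
          = (if Nat.lcm (Nat.gcd q (d ^ k)) (Nat.gcd q (e ^ k)) ∣ a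
              then c k q d * c k q e else 0) := by
        intro a
        rw [t, t]
        by_cases hd1 : Nat.gcd q (d ^ k) ∣ a <;> by_cases he1 : Nat.gcd q (e ^ k) ∣ a
        · rw [if_pos hd1, if_pos he1, if_pos (Nat.lcm_dvd hd1 he1)]
        · rw [if_pos hd1, if_neg he1,
            if_neg (fun h => he1 ((Nat.dvd_lcm_right _ _).trans h)), mul_zero]
        · rw [if_neg hd1, if_pos he1,
            if_neg (fun h => hd1 ((Nat.dvd_lcm_left _ _).trans h)), zero_mul]
        · rw [if_neg hd1, if_neg he1,
            if_neg (fun h => hd1 ((Nat.dvd_lcm_left _ _).trans h)), zero_mul]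
      rw [Finset.sum_congr rfl (fun a _ => hcond a), count_dvd, ident hk hq d e]
    rw [tsum_congr h5, tsum_mul_left]
  rw [h2, tsum_congr h3, ← tsum_mul_left]
  exact tsum_congr fun d => by ring


/-! ### The per-`d` error bound -/

lemma AB_bound {k q : ℕ} (hk : 2 ≤ k) (hq : 1 ≤ q) {x : ℝ} (hx : 1 ≤ x) (d : ℕ) :
    |(∑ e ∈ Finset.Icc 1 ⌊x⌋₊, (moebius e : ℝ) * ((⌊x⌋₊ / Lf k q d e : ℕ) : ℝ))
      - x * ∑' e : ℕ, (moebius e : ℝ) / (Lf k q d e : ℝ)|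
      ≤ (2 + 2 ^ (k - 1)) * x ^ ((1 : ℝ) / k) := by
  have hx0 : (0:ℝ) < x := by linarith
  set N := ⌊x⌋₊ with hN
  set Y := x ^ ((1:ℝ)/k) with hY
  have hY1 : (1:ℝ) ≤ Y := Real.one_le_rpow hx (by positivity)
  have hY0 : (0:ℝ) < Y := by linarith
  have hYk : Y ^ k = x := by
    rw [hY, ← Real.rpow_natCast (x ^ ((1:ℝ)/k)) k, ← Real.rpow_mul hx0.le]
    rw [show (1:ℝ)/k * k = 1 by field_simp]
    exact Real.rpow_one x
  have hNx : (N:ℝ) ≤ x := Nat.floor_le hx0.le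
  have hxN : x < (N:ℝ) + 1 := Nat.lt_floor_add_one x
  have hYfl1 : 1 ≤ ⌊Y⌋₊ := Nat.le_floor (by exact_mod_cast hY1)
  -- the criterion
  have hcrit : ∀ e : ℕ, 1 ≤ e → (e ^ k ≤ N ↔ e ≤ ⌊Y⌋₊) := by
    intro e he
    constructor
    · intro h
      have h1 : ((e:ℝ)) ^ k ≤ x := by
        calc ((e:ℝ)) ^ k = ((e ^ k : ℕ) : ℝ) := by push_cast; ring
          _ ≤ (N:ℝ) := by exact_mod_cast h
          _ ≤ x := hNx
      have h2 : (e:ℝ) ≤ Y := by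
        refine (pow_le_pow_iff_left₀ (by positivity) hY0.le (by omega : k ≠ 0)).1 ?_
        rw [hYk]; exact h1
      exact Nat.le_floor h2
    · intro h
      have h1 : (e:ℝ) ≤ Y := le_trans (by exact_mod_cast h) (Nat.floor_le hY0.le)
      have h2 : ((e:ℝ)) ^ k ≤ x := by
        rw [← hYk]; exact pow_le_pow_left₀ (by positivity) h1 k
      refine Nat.le_floor ?_
      push_cast
      exact h2
  -- express the finite sum as a tsum
  set F := fun e : ℕ => (if e ∈ Finset.Icc 1 N then (moebius e : ℝ) * ((N / Lf k q d e : ℕ) : ℝ) else 0)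
    with hF
  have hFzero : ∀ e ∉ Finset.Icc 1 N, F e = 0 := fun e he => if_neg he
  have hFsum : Summable F := summable_of_ne_finset_zero hFzero
  have hFeq : ∑ e ∈ Finset.Icc 1 N, (moebius e : ℝ) * ((N / Lf k q d e : ℕ) : ℝ) = ∑' e, F e := by
    rw [tsum_eq_sum hFzero]
    exact Finset.sum_congr rfl fun e he => (if_pos he).symm
  have hGsum : Summable (fun e : ℕ => x * ((moebius e : ℝ) / (Lf k q d e : ℝ))) :=
    (summable_h hk hq d).mul_left x
  rw [hFeq, ← tsum_mul_left, ← Summable.tsum_sub hFsum hGsum]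
  -- pointwise bound
  set w1 := fun e : ℕ => (if 1 ≤ e ∧ e ^ k ≤ N then (2:ℝ) else 0) with hw1
  set w2 := fun e : ℕ => (if ⌊Y⌋₊ < e then x * ((e:ℝ) ^ k)⁻¹ else 0) with hw2
  have hw : ∀ e : ℕ, ‖F e - x * ((moebius e : ℝ) / (Lf k q d e : ℝ))‖ ≤ w1 e + w2 e := by
    intro e
    have hw2nn : 0 ≤ w2 e := by rw [hw2]; dsimp only; split_ifs <;> positivity
    have hw1nn : 0 ≤ w1 e := by rw [hw1]; dsimp only; split_ifs <;> norm_num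
    rcases Nat.eq_zero_or_pos e with he0 | he1
    · subst he0
      have : F 0 = 0 := hFzero 0 (by simp)
      rw [this]
      simp only [ArithmeticFunction.map_zero, Int.cast_zero, zero_div, mul_zero, sub_zero,
        norm_zero]
      linarith
    · have hLpos : (0:ℝ) < (Lf k q d e : ℝ) := by exact_mod_cast Lf_pos hq he1 k d
      have hLek : ((e:ℝ)) ^ k ≤ (Lf k q d e : ℝ) := by exact_mod_cast pow_le_Lf hq he1 k d
      by_cases hek : e ^ k ≤ N
      · -- main range : |N/L - x/L| ≤ 2
        have heN : e ∈ Finset.Icc 1 N := by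
          refine Finset.mem_Icc.2 ⟨he1, le_trans (Nat.le_self_pow (by omega) e) hek⟩
        have hFe : F e = (moebius e : ℝ) * ((N / Lf k q d e : ℕ) : ℝ) := if_pos heN
        have key : |((N / Lf k q d e : ℕ) : ℝ) - x / (Lf k q d e : ℝ)| ≤ 2 := by
          have hub : ((N / Lf k q d e : ℕ) : ℝ) ≤ x / (Lf k q d e : ℝ) := by
            calc ((N / Lf k q d e : ℕ) : ℝ) ≤ (N:ℝ) / (Lf k q d e : ℝ) := Nat.cast_div_le
              _ ≤ x / (Lf k q d e : ℝ) := by gcongr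
          have hlb : x / (Lf k q d e : ℝ) ≤ ((N / Lf k q d e : ℕ) : ℝ) + 2 := by
            have hmod : N < Lf k q d e * (N / Lf k q d e) + Lf k q d e := by
              have h1 := Nat.div_add_mod N (Lf k q d e)
              have h2 : N % Lf k q d e < Lf k q d e :=
                Nat.mod_lt _ (Lf_pos hq he1 k d)
              omega
            have hmodR : (N:ℝ) < (Lf k q d e : ℝ) * ((N / Lf k q d e : ℕ) : ℝ)
                + (Lf k q d e : ℝ) := by exact_mod_cast hmod
            have hL1 : (1:ℝ) ≤ (Lf k q d e : ℝ) := by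
              exact_mod_cast Lf_pos hq he1 k d
            rw [div_le_iff₀ hLpos]
            nlinarith [hmodR]
          have hnn : (0:ℝ) ≤ ((N / Lf k q d e : ℕ) : ℝ) := by positivity
          rw [abs_le]
          constructor <;> nlinarith
        calc ‖F e - x * ((moebius e : ℝ) / (Lf k q d e : ℝ))‖
            = |(moebius e : ℝ)| * |((N / Lf k q d e : ℕ) : ℝ) - x / (Lf k q d e : ℝ)| := by
              rw [hFe, Real.norm_eq_abs, ← abs_mul]
              congr 1
              ring
          _ ≤ 1 * 2 := mul_le_mul (moebius_abs e) key (abs_nonneg _) zero_le_one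
          _ ≤ w1 e + w2 e := by
              rw [hw1]
              dsimp only
              rw [if_pos ⟨he1, hek⟩]
              linarith
      · -- tail range
        have hFe : F e = 0 := by
          by_cases heN : e ∈ Finset.Icc 1 N
          · rw [hF]
            dsimp only
            rw [if_pos heN, Nat.div_eq_of_lt (by
              have := pow_le_Lf hq he1 k d
              omega), Nat.cast_zero, mul_zero]
          · exact hFzero e heN
        have hYe : ⌊Y⌋₊ < e := by
          by_contra hcon
          exact hek ((hcrit e he1).2 (by omega))
        have hbound : ‖F e - x * ((moebius e : ℝ) / (Lf k q d e : ℝ))‖ ≤ x * ((e:ℝ) ^ k)⁻¹ := by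
          rw [hFe, zero_sub, norm_neg, Real.norm_eq_abs, abs_mul, abs_of_pos hx0, abs_div,
            abs_of_pos hLpos]
          have hek0 : (0:ℝ) < ((e:ℝ)) ^ k := by positivity
          apply mul_le_mul_of_nonneg_left _ hx0.le
          calc |(moebius e : ℝ)| / (Lf k q d e : ℝ) ≤ 1 / (Lf k q d e : ℝ) := by
                gcongr
                exact moebius_abs e
            _ ≤ 1 / ((e:ℝ)) ^ k := one_div_le_one_div_of_le hek0 hLek
            _ = ((e:ℝ) ^ k)⁻¹ := one_div _
        calc ‖F e - x * ((moebius e : ℝ) / (Lf k q d e : ℝ))‖ ≤ x * ((e:ℝ) ^ k)⁻¹ := hbound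
          _ ≤ w1 e + w2 e := by
              rw [hw2]
              dsimp only
              rw [if_pos hYe]
              linarith
  -- summability of the bounds
  have hw1sum : Summable w1 := by
    apply summable_of_ne_finset_zero (s := Finset.Icc 1 ⌊Y⌋₊)
    intro b hb
    rw [hw1]
    dsimp only
    rw [Finset.mem_Icc, not_and_or] at hb
    rcases hb with hb | hb
    · rw [if_neg (by omega)]
    · refine if_neg ?_
      rintro ⟨hb1, hb2⟩
      exact hb ((hcrit b hb1).1 hb2)
  have hw2sum : Summable w2 := by
    apply Summable.of_nonneg_of_le (fun e => by rw [hw2]; dsimp only; split_ifs <;> positivity)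
      (fun e => ?_) ((summable_invpow hk).mul_left x)
    rw [hw2]
    dsimp only
    split_ifs with h
    · exact le_refl _
    · positivity
  have hwsum : Summable (fun e => w1 e + w2 e) := hw1sum.add hw2sum
  have hnormsum : Summable (fun e : ℕ =>
      ‖F e - x * ((moebius e : ℝ) / (Lf k q d e : ℝ))‖) :=
    Summable.of_nonneg_of_le (fun e => norm_nonneg _) hw hwsum
  -- tsum bounds
  have hsw1 : ∑' e, w1 e ≤ 2 * Y := by
    have h1 : ∑' e, w1 e = ∑ e ∈ Finset.Icc 1 ⌊Y⌋₊, w1 e := by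
      apply tsum_eq_sum
      intro b hb
      rw [hw1]
      dsimp only
      rw [Finset.mem_Icc, not_and_or] at hb
      rcases hb with hb | hb
      · rw [if_neg (by omega)]
      · refine if_neg ?_
        rintro ⟨hb1, hb2⟩
        exact hb ((hcrit b hb1).1 hb2)
    rw [h1]
    calc ∑ e ∈ Finset.Icc 1 ⌊Y⌋₊, w1 e ≤ ∑ e ∈ Finset.Icc 1 ⌊Y⌋₊, (2:ℝ) := by
          apply Finset.sum_le_sum
          intro i _
          rw [hw1]
          dsimp only
          split_ifs <;> norm_num
      _ = (⌊Y⌋₊ : ℝ) * 2 := by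
          rw [Finset.sum_const, Nat.card_Icc]
          simp [nsmul_eq_mul]
      _ ≤ Y * 2 := by
          have := Nat.floor_le hY0.le
          gcongr
      _ = 2 * Y := by ring
  have hsw2 : ∑' e, w2 e ≤ 2 ^ (k-1) * Y := by
    have h1 : ∑' e, w2 e = x * ∑' e : ℕ, (if ⌊Y⌋₊ < e then ((e:ℝ) ^ k)⁻¹ else 0) := by
      rw [← tsum_mul_left]
      refine tsum_congr fun e => ?_
      rw [hw2]
      dsimp only
      split_ifs <;> simp
    rw [h1]
    have h2 := tailk hk ⌊Y⌋₊ hYfl1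
    have hfl2 : Y / 2 ≤ (⌊Y⌋₊ : ℝ) := by
      rcases le_or_gt 2 Y with h | h
      · have := Nat.lt_floor_add_one Y
        linarith
      · have h3 : (1:ℝ) ≤ (⌊Y⌋₊ : ℝ) := by exact_mod_cast hYfl1
        linarith
    have hfl0 : (0:ℝ) < (⌊Y⌋₊ : ℝ) := by exact_mod_cast hYfl1
    have h4 : ((⌊Y⌋₊:ℝ) ^ (k-1))⁻¹ ≤ ((Y/2) ^ (k-1))⁻¹ := by
      apply inv_anti₀ (by positivity)
      exact pow_le_pow_left₀ (by positivity) hfl2 _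
    have h5 : x * ((Y/2) ^ (k-1))⁻¹ = 2 ^ (k-1) * Y := by
      have hxeq : x = Y ^ (k-1) * Y := by
        rw [← pow_succ, show k - 1 + 1 = k by omega, hYk]
      rw [hxeq, div_pow, inv_div]
      have hYpow : (0:ℝ) < Y ^ (k-1) := by positivity
      field_simp
    calc x * ∑' e : ℕ, (if ⌊Y⌋₊ < e then ((e:ℝ) ^ k)⁻¹ else 0)
        ≤ x * ((⌊Y⌋₊:ℝ) ^ (k-1))⁻¹ := by
          apply mul_le_mul_of_nonneg_left h2 hx0.le
      _ ≤ x * ((Y/2) ^ (k-1))⁻¹ := mul_le_mul_of_nonneg_left h4 hx0.le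
      _ = 2 ^ (k-1) * Y := h5
  -- put everything together
  calc |∑' e : ℕ, (F e - x * ((moebius e : ℝ) / (Lf k q d e : ℝ)))|
      ≤ ∑' e : ℕ, ‖F e - x * ((moebius e : ℝ) / (Lf k q d e : ℝ))‖ := by
        rw [← Real.norm_eq_abs]
        exact norm_tsum_le_tsum_norm hnormsum
    _ ≤ ∑' e : ℕ, (w1 e + w2 e) := Summable.tsum_le_tsum hw hnormsum hwsum
    _ = (∑' e, w1 e) + ∑' e, w2 e := Summable.tsum_add hw1sum hw2sum
    _ ≤ 2 * Y + 2 ^ (k-1) * Y := add_le_add hsw1 hsw2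
    _ = (2 + 2 ^ (k - 1)) * Y := by ring

end S18

/-- Uniformly for `1 ≤ q ≤ x`:
`∑_{n ≤ x, n k-free} η(q,n) = x ∑_{a=1}^q η(q,a)² + O_{k,ε}(x^{1/k+ε})`. -/
theorem statement18 (k : ℕ) (hk : 2 ≤ k) (ε : ℝ) (hε : 0 < ε) :
    ∃ C > (0 : ℝ), ∀ x : ℝ, ∀ q : ℕ, 1 ≤ q → (q : ℝ) ≤ x →
      |(∑ n ∈ Finset.Icc 1 ⌊x⌋₊,
          if ∀ p : ℕ, p.Prime → ¬ p ^ k ∣ n then eta k q n else 0) -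
        x * ∑ a ∈ Finset.Icc 1 q, (eta k q a) ^ 2| ≤ C * x ^ ((1 : ℝ) / k + ε) := by
  refine ⟨4 + 2 ^ k, by positivity, ?_⟩
  intro x q hq hqx
  have hx : (1:ℝ) ≤ x := le_trans (by exact_mod_cast hq) hqx
  have hx0 : (0:ℝ) < x := by linarith
  set Y := x ^ ((1:ℝ)/k) with hY
  have hY1 : (1:ℝ) ≤ Y := Real.one_le_rpow hx (by positivity)
  rw [S18.S_eq k q ⌊x⌋₊ hk hq, S18.T_eq k q hk hq x]
  set A := fun d : ℕ =>
    ∑ e ∈ Finset.Icc 1 ⌊x⌋₊, (moebius e : ℝ) * ((⌊x⌋₊ / S18.Lf k q d e : ℕ) : ℝ) with hA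
  set B := fun d : ℕ => ∑' e : ℕ, (moebius e : ℝ) / (S18.Lf k q d e : ℝ) with hB
  have hdiff_bd : ∀ d : ℕ, ‖S18.c k q d * (A d - x * B d)‖
      ≤ ((d:ℝ) ^ k)⁻¹ * ((2 + 2 ^ (k - 1)) * Y) := by
    intro d
    rw [Real.norm_eq_abs, abs_mul]
    apply mul_le_mul (S18.c_abs hk hq d) (S18.AB_bound hk hq hx d) (abs_nonneg _)
      (by positivity)
  have hM0 : (0:ℝ) ≤ (2 + 2 ^ (k - 1)) * Y := by positivity
  have hgsum : Summable (fun d : ℕ => ((d:ℝ) ^ k)⁻¹ * ((2 + 2 ^ (k - 1)) * Y)) :=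
    (S18.summable_invpow hk).mul_right _
  have hdiffS : Summable (fun d : ℕ => S18.c k q d * (A d - x * B d)) :=
    Summable.of_norm_bounded hgsum hdiff_bd
  have hBsum : Summable (fun d : ℕ => S18.c k q d * (x * B d)) := by
    apply Summable.of_norm_bounded ((S18.summable_invpow hk).mul_right (x * 2))
    intro d
    rw [Real.norm_eq_abs, abs_mul, abs_mul, abs_of_pos hx0]
    exact mul_le_mul (S18.c_abs hk hq d)
      (mul_le_mul_of_nonneg_left (S18.B_abs hk hq d) hx0.le) (by positivity) (by positivity)
  have hAsum : Summable (fun d : ℕ => S18.c k q d * A d) := by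
    refine (hdiffS.add hBsum).congr fun d => ?_
    ring
  rw [← Summable.tsum_sub hAsum hBsum]
  have heq : ∀ d : ℕ, S18.c k q d * A d - S18.c k q d * (x * B d)
      = S18.c k q d * (A d - x * B d) := fun d => by ring
  rw [tsum_congr heq]
  have hnorm : Summable (fun d : ℕ => ‖S18.c k q d * (A d - x * B d)‖) :=
    Summable.of_nonneg_of_le (fun d => norm_nonneg _) hdiff_bd hgsum
  calc |∑' d : ℕ, S18.c k q d * (A d - x * B d)|
      ≤ ∑' d : ℕ, ‖S18.c k q d * (A d - x * B d)‖ := by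
        rw [← Real.norm_eq_abs]
        exact norm_tsum_le_tsum_norm hnorm
    _ ≤ ∑' d : ℕ, ((d:ℝ) ^ k)⁻¹ * ((2 + 2 ^ (k - 1)) * Y) :=
        Summable.tsum_le_tsum hdiff_bd hnorm hgsum
    _ = (∑' d : ℕ, ((d:ℝ) ^ k)⁻¹) * ((2 + 2 ^ (k - 1)) * Y) := tsum_mul_right
    _ ≤ 2 * ((2 + 2 ^ (k - 1)) * Y) :=
        mul_le_mul_of_nonneg_right (S18.tsum_invpow_le hk) hM0
    _ = (4 + 2 ^ k) * Y := by
        have h2k : (2:ℝ) ^ (k - 1) * 2 = 2 ^ k := by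
          rw [← pow_succ]
          congr 1
          omega
        nlinarith [h2k]
    _ ≤ (4 + 2 ^ k) * x ^ ((1 : ℝ) / k + ε) := by
        apply mul_le_mul_of_nonneg_left _ (by positivity)
        rw [hY]
        exact Real.rpow_le_rpow_of_exponent_le hx (by linarith)
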